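/- If L(X^n; Y^n) = L₁(X^n → Y^n), then p(x^n) = p(x^n || y^{n-1}) for all (x^n, y^n) with p(x^n, y^n) > 0; conversely, if p(x^n) = p(x^n||y^{n-1}) on the support of p, then L(X^n;Y^n) = L₁(X^n→Y^n) = L₂(X^n→Y^n). -/
import Mathlib


open scoped Classical
open Real

noncomputable section

variable {α β : Type} [Fintype α] [DecidableEq α] [Fintype β] [DecidableEq β]

/-- Probability of the event `E` under the joint pmf `p` of `(X^n, Y^n)`. -/
def pr {n : ℕ} (p : (Fin n → α) → (Fin n → β) → ℝ)
    (E : (Fin n → α) → (Fin n → β) → Prop) : ℝ :=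
  ∑ x, ∑ y, if E x y then p x y else 0

/-- `p` is a probability mass function on pairs of sequences. -/
def IsPmf {n : ℕ} (p : (Fin n → α) → (Fin n → β) → ℝ) : Prop :=
  (∀ x y, 0 ≤ p x y) ∧ ∑ x, ∑ y, p x y = 1

/-- The conditional pmf `p(x_i | x^{i-1}, y^{i-d})` evaluated along `(x, y)`. -/
def condX {n : ℕ} (p : (Fin n → α) → (Fin n → β) → ℝ) (d : ℕ) (i : Fin n)
    (x : Fin n → α) (y : Fin n → β) : ℝ :=
  pr p (fun x' y' => (∀ j, j < i → x' j = x j) ∧ x' i = x i ∧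
      ∀ j : Fin n, (j : ℕ) + d ≤ (i : ℕ) → y' j = y j) /
  pr p (fun x' y' => (∀ j, j < i → x' j = x j) ∧
      ∀ j : Fin n, (j : ℕ) + d ≤ (i : ℕ) → y' j = y j)

/-- The conditional pmf `p(y_i | y^{i-1}, x^{i-d})` evaluated along `(x, y)`. -/
def condY {n : ℕ} (p : (Fin n → α) → (Fin n → β) → ℝ) (d : ℕ) (i : Fin n)
    (x : Fin n → α) (y : Fin n → β) : ℝ :=
  pr p (fun x' y' => (∀ j, j < i → y' j = y j) ∧ y' i = y i ∧
      ∀ j : Fin n, (j : ℕ) + d ≤ (i : ℕ) → x' j = x j) /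
  pr p (fun x' y' => (∀ j, j < i → y' j = y j) ∧
      ∀ j : Fin n, (j : ℕ) + d ≤ (i : ℕ) → x' j = x j)

/-- Causally conditioned pmf `p(x^n || y^{n-d}) = ∏ᵢ p(xᵢ | x^{i-1}, y^{i-d})`. -/
def ccX {n : ℕ} (p : (Fin n → α) → (Fin n → β) → ℝ) (d : ℕ)
    (x : Fin n → α) (y : Fin n → β) : ℝ :=
  ∏ i, condX p d i x y

/-- Causally conditioned pmf `p(y^n || x^{n-d}) = ∏ᵢ p(yᵢ | y^{i-1}, x^{i-d})`. -/
def ccY {n : ℕ} (p : (Fin n → α) → (Fin n → β) → ℝ) (d : ℕ)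
    (x : Fin n → α) (y : Fin n → β) : ℝ :=
  ∏ i, condY p d i x y

/-- Marginal pmf of `X^n`. -/
def pX {n : ℕ} (p : (Fin n → α) → (Fin n → β) → ℝ) (x : Fin n → α) : ℝ := ∑ y, p x y

/-- Marginal pmf of `Y^n`. -/
def pY {n : ℕ} (p : (Fin n → α) → (Fin n → β) → ℝ) (y : Fin n → β) : ℝ := ∑ x, p x y

/-- `H(X^n)` in bits. -/
def HX {n : ℕ} (p : (Fin n → α) → (Fin n → β) → ℝ) : ℝ :=
  -(∑ x, ∑ y, p x y * Real.logb 2 (pX p x))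

/-- `H(Y^n)` in bits. -/
def HY {n : ℕ} (p : (Fin n → α) → (Fin n → β) → ℝ) : ℝ :=
  -(∑ x, ∑ y, p x y * Real.logb 2 (pY p y))

/-- Joint entropy `H(X^n, Y^n)` in bits. -/
def Hjoint {n : ℕ} (p : (Fin n → α) → (Fin n → β) → ℝ) : ℝ :=
  -(∑ x, ∑ y, p x y * Real.logb 2 (p x y))

/-- Conditional entropy `H(X_i | X^{i-1}, Y^{i-d})` in bits. -/
def HcondX {n : ℕ} (p : (Fin n → α) → (Fin n → β) → ℝ) (d : ℕ) (i : Fin n) : ℝ :=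
  -(∑ x, ∑ y, p x y * Real.logb 2 (condX p d i x y))

/-- Conditional entropy `H(Y_i | Y^{i-1}, X^{i-d})` in bits. -/
def HcondY {n : ℕ} (p : (Fin n → α) → (Fin n → β) → ℝ) (d : ℕ) (i : Fin n) : ℝ :=
  -(∑ x, ∑ y, p x y * Real.logb 2 (condY p d i x y))

/-- Causally conditional entropy `H(X^n || Y^{n-d}) = Σᵢ H(Xᵢ | X^{i-1}, Y^{i-d})`. -/
def HccX {n : ℕ} (p : (Fin n → α) → (Fin n → β) → ℝ) (d : ℕ) : ℝ := ∑ i, HcondX p d i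

/-- Causally conditional entropy `H(Y^n || X^{n-d})`. -/
def HccY {n : ℕ} (p : (Fin n → α) → (Fin n → β) → ℝ) (d : ℕ) : ℝ := ∑ i, HcondY p d i

/-- Conditional mutual information `I(Y^i; X_i | X^{i-1})`
(as the expectation of `log (p(xᵢ|x^{i-1},y^i) / p(xᵢ|x^{i-1}))`;
note `condX p n` is `p(xᵢ|x^{i-1})`, conditioning on no `y`'s at all). -/
def cmiYX {n : ℕ} (p : (Fin n → α) → (Fin n → β) → ℝ) (i : Fin n) : ℝ :=
  ∑ x, ∑ y, p x y * Real.logb 2 (condX p 0 i x y / condX p n i x y)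

/-- Conditional mutual information `I(X^i; Y_i | Y^{i-1})`. -/
def cmiXY {n : ℕ} (p : (Fin n → α) → (Fin n → β) → ℝ) (i : Fin n) : ℝ :=
  ∑ x, ∑ y, p x y * Real.logb 2 (condY p 0 i x y / condY p n i x y)

/-- Directed information `I(Y^n → X^n) = Σᵢ I(Y^i; X_i | X^{i-1})`. -/
def dirYX {n : ℕ} (p : (Fin n → α) → (Fin n → β) → ℝ) : ℝ := ∑ i, cmiYX p i

/-- Directed information `I(X^n → Y^n) = Σᵢ I(X^i; Y_i | Y^{i-1})`. -/
def dirXY {n : ℕ} (p : (Fin n → α) → (Fin n → β) → ℝ) : ℝ := ∑ i, cmiXY p i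

/-- Directed information `I(Y^{n-1} → X^n) = Σᵢ I(Y^{i-1}; X_i | X^{i-1})`
(the term for `i = 1` vanishes, so we may sum over all `i`). -/
def dirY1X {n : ℕ} (p : (Fin n → α) → (Fin n → β) → ℝ) : ℝ :=
  ∑ i, ∑ x, ∑ y, p x y * Real.logb 2 (condX p 1 i x y / condX p n i x y)

/-- Mutual information `I(X^n; Y^n)` in bits. -/
def miXY {n : ℕ} (p : (Fin n → α) → (Fin n → β) → ℝ) : ℝ :=
  ∑ x, ∑ y, p x y * Real.logb 2 (p x y / (pX p x * pY p y))

/-- Lautum information `L(X^n; Y^n) = Σ p(x^n)p(y^n) log [p(x^n)p(y^n)/p(x^n,y^n)]`. -/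
def lautum {n : ℕ} (p : (Fin n → α) → (Fin n → β) → ℝ) : ℝ :=
  ∑ x, ∑ y, pX p x * pY p y * Real.logb 2 (pX p x * pY p y / p x y)

/-- First-type directed lautum information
`L₁(X^n → Y^n) = Σ p(x^n)p(y^n) log [p(y^n)/p(y^n||x^n)]`. -/
def lautum1XY {n : ℕ} (p : (Fin n → α) → (Fin n → β) → ℝ) : ℝ :=
  ∑ x, ∑ y, pX p x * pY p y * Real.logb 2 (pY p y / ccY p 0 x y)

/-- First-type directed lautum information
`L₁(Y^{n-1} → X^n) = Σ p(x^n)p(y^n) log [p(x^n)/p(x^n||y^{n-1})]`. -/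
def lautum1Y1X {n : ℕ} (p : (Fin n → α) → (Fin n → β) → ℝ) : ℝ :=
  ∑ x, ∑ y, pX p x * pY p y * Real.logb 2 (pX p x / ccX p 1 x y)

/-- Second-type directed lautum information
`L₂(X^n → Y^n) = Σ p(x^n||y^{n-1})p(y^n) log [p(y^n)/p(y^n||x^n)]`. -/
def lautum2XY {n : ℕ} (p : (Fin n → α) → (Fin n → β) → ℝ) : ℝ :=
  ∑ x, ∑ y, ccX p 1 x y * pY p y * Real.logb 2 (pY p y / ccY p 0 x y)


-- Auxiliary lemmas


lemma gibbs_term {q r : ℝ} (hq0 : 0 ≤ q) (hr0 : 0 ≤ r) (hpos : 0 < q → 0 < r) :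
    (q - r) / Real.log 2 ≤ q * Real.logb 2 (q / r) := by
  have hlog2 : (0:ℝ) < Real.log 2 := Real.log_pos (by norm_num)
  rcases eq_or_lt_of_le hq0 with h | h
  · rw [← h, zero_mul]
    exact div_nonpos_of_nonpos_of_nonneg (by linarith) hlog2.le
  · have hri := hpos h
    have h1 : Real.log (r / q) ≤ r / q - 1 := Real.log_le_sub_one_of_pos (div_pos hri h)
    have h2 : Real.log (r / q) = - Real.log (q / r) := by
      rw [← Real.log_inv]; congr 1; rw [inv_div]
    have h3 : q - r ≤ q * Real.log (q / r) := by
      rw [h2] at h1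
      have := mul_le_mul_of_nonneg_left h1 hq0
      rw [mul_sub, mul_div_cancel₀ _ (ne_of_gt h), mul_one, mul_neg] at this
      linarith
    rw [Real.logb, ← mul_div_assoc]
    exact (div_le_div_iff_of_pos_right hlog2).mpr h3

lemma gibbs_term_eq {q r : ℝ} (hq : 0 < q) (hr : 0 < r)
    (heq : (q - r) / Real.log 2 = q * Real.logb 2 (q / r)) : q = r := by
  have hlog2 : (0:ℝ) < Real.log 2 := Real.log_pos (by norm_num)
  by_contra hne
  have hne' : r / q ≠ 1 := by
    intro h; exact hne ((div_eq_one_iff_eq (ne_of_gt hq)).mp h).symm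
  have h1 : Real.log (r / q) < r / q - 1 :=
    Real.log_lt_sub_one_of_pos (div_pos hr hq) hne'
  have h2 : Real.log (r / q) = - Real.log (q / r) := by
    rw [← Real.log_inv]; congr 1; rw [inv_div]
  rw [h2] at h1
  have h3 : q - r < q * Real.log (q / r) := by
    have := mul_lt_mul_of_pos_left h1 hq
    rw [mul_sub, mul_div_cancel₀ _ (ne_of_gt hq), mul_one, mul_neg] at this
    linarith
  rw [Real.logb, ← mul_div_assoc] at heq
  have := (div_lt_div_iff_of_pos_right hlog2).mpr h3
  rw [← heq] at this
  exact lt_irrefl _ this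

lemma gibbs {ι : Type*} [Fintype ι] (q r : ι → ℝ)
    (hq0 : ∀ i, 0 ≤ q i) (hq1 : ∑ i, q i = 1)
    (hr0 : ∀ i, 0 ≤ r i) (hr1 : ∑ i, r i ≤ 1)
    (hpos : ∀ i, 0 < q i → 0 < r i)
    (hsum : (∑ i, q i * Real.logb 2 (q i / r i)) = 0) :
    ∀ i, 0 < q i → q i = r i := by
  have hlog2 : (0:ℝ) < Real.log 2 := Real.log_pos (by norm_num)
  set T : ι → ℝ := fun i => q i * Real.logb 2 (q i / r i) with hT
  set c : ι → ℝ := fun i => (q i - r i) / Real.log 2 with hc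
  have hle : ∀ i, c i ≤ T i := fun i => gibbs_term (hq0 i) (hr0 i) (hpos i)
  have hcsum : ∑ i, c i = (1 - ∑ i, r i) / Real.log 2 := by
    simp only [hc, ← Finset.sum_div, Finset.sum_sub_distrib, hq1]
  have hcnn : 0 ≤ ∑ i, c i := by
    rw [hcsum]; apply div_nonneg (by linarith) hlog2.le
  have hzero : ∀ i ∈ Finset.univ, T i - c i = 0 := by
    rw [← Finset.sum_eq_zero_iff_of_nonneg (fun i _ => sub_nonneg.mpr (hle i))]
    have h1 : ∑ i, (T i - c i) = - ∑ i, c i := by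
      rw [Finset.sum_sub_distrib, hsum, zero_sub]
    have h2 : ∑ i, (T i - c i) ≥ 0 :=
      Finset.sum_nonneg (fun i _ => sub_nonneg.mpr (hle i))
    linarith
  intro i hqi
  have := hzero i (Finset.mem_univ i)
  have heq : c i = T i := by linarith [sub_eq_zero.mp this]
  exact gibbs_term_eq hqi (hpos i hqi) heq

variable {α β : Type} [Fintype α] [DecidableEq α] [Fintype β] [DecidableEq β]

section PrLemmas
variable {n : ℕ} (p : (Fin n → α) → (Fin n → β) → ℝ)

lemma pr_congr {E F : (Fin n → α) → (Fin n → β) → Prop}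
    (h : ∀ x y, E x y ↔ F x y) : pr p E = pr p F := by
  unfold pr
  refine Finset.sum_congr rfl fun x _ => Finset.sum_congr rfl fun y _ => ?_
  simp [h x y]

lemma pr_nonneg (hp : ∀ x y, 0 ≤ p x y) (E : (Fin n → α) → (Fin n → β) → Prop) :
    0 ≤ pr p E := by
  unfold pr
  exact Finset.sum_nonneg fun x _ => Finset.sum_nonneg fun y _ => by
    split <;> simp [hp x y]

lemma pr_mono (hp : ∀ x y, 0 ≤ p x y) {E F : (Fin n → α) → (Fin n → β) → Prop}
    (h : ∀ x y, E x y → F x y) : pr p E ≤ pr p F := by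
  unfold pr
  refine Finset.sum_le_sum fun x _ => Finset.sum_le_sum fun y _ => ?_
  by_cases hE : E x y
  · simp [hE, h x y hE]
  · simp only [hE, if_false]
    split <;> simp [hp x y]

lemma pr_true (hp : IsPmf p) : pr p (fun _ _ => True) = 1 := by
  unfold pr; simpa using hp.2

lemma pr_le_point (hp : IsPmf p) {E : (Fin n → α) → (Fin n → β) → Prop}
    (x : Fin n → α) (y : Fin n → β) (h : ∀ x' y', E x' y' → x' = x ∧ y' = y) :
    pr p E ≤ p x y := by
  have : pr p E ≤ pr p (fun x' y' => x' = x ∧ y' = y) := pr_mono p hp.1 h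
  refine this.trans_eq ?_
  unfold pr
  rw [Finset.sum_eq_single x, Finset.sum_eq_single y] <;>
    simp (config := {contextual := true}) [eq_comm]

end PrLemmas

section Chain
variable {n : ℕ} (p : (Fin n → α) → (Fin n → β) → ℝ) (x : Fin n → α) (y : Fin n → β)

/-- probability that both sequences agree with `(x,y)` on the first `m` coordinates -/
def Apre (m : ℕ) : ℝ :=
  pr p (fun x' y' => (∀ j : Fin n, (j:ℕ) < m → x' j = x j) ∧ (∀ j : Fin n, (j:ℕ) < m → y' j = y j))

/-- probability that `x'` agrees on the first `m+1` and `y'` on the first `m` coordinates -/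
def Bpre (m : ℕ) : ℝ :=
  pr p (fun x' y' => (∀ j : Fin n, (j:ℕ) ≤ m → x' j = x j) ∧ (∀ j : Fin n, (j:ℕ) < m → y' j = y j))

lemma condX_one (i : Fin n) : condX p 1 i x y = Bpre p x y i / Apre p x y i := by
  unfold condX Bpre Apre
  refine congrArg₂ (· / ·) (pr_congr p ?_) (pr_congr p ?_)
  · intro x' y'
    constructor
    · rintro ⟨h1, h2, h3⟩
      refine ⟨fun j hj => ?_, fun j hj => h3 j (by omega)⟩
      rcases lt_or_eq_of_le hj with h | h
      · exact h1 j h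
      · have : j = i := Fin.ext h
        subst this; exact h2
    · rintro ⟨h1, h2⟩
      exact ⟨fun j hj => h1 j (le_of_lt hj), h1 i le_rfl, fun j hj => h2 j (by omega)⟩
  · intro x' y'
    exact ⟨fun ⟨h1, h2⟩ => ⟨fun j hj => h1 j hj, fun j hj => h2 j (by omega)⟩,
      fun ⟨h1, h2⟩ => ⟨fun j hj => h1 j hj, fun j hj => h2 j (by omega)⟩⟩

lemma condY_zero (i : Fin n) : condY p 0 i x y = Apre p x y ((i:ℕ)+1) / Bpre p x y i := by
  unfold condY Bpre Apre
  refine congrArg₂ (· / ·) (pr_congr p ?_) (pr_congr p ?_)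
  · intro x' y'
    constructor
    · rintro ⟨h1, h2, h3⟩
      refine ⟨fun j hj => h3 j (by omega), fun j hj => ?_⟩
      rcases lt_or_eq_of_le (Nat.lt_succ_iff.mp hj) with h | h
      · exact h1 j h
      · have : j = i := Fin.ext h
        subst this; exact h2
    · rintro ⟨h1, h2⟩
      exact ⟨fun j hj => h2 j (by omega), h2 i (by omega), fun j hj => h1 j (by omega)⟩
  · intro x' y'
    exact ⟨fun ⟨h1, h2⟩ => ⟨fun j hj => h2 j (by omega), fun j hj => h1 j hj⟩,
      fun ⟨h1, h2⟩ => ⟨fun j hj => h2 j hj, fun j hj => h1 j (by omega)⟩⟩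

lemma Apre_zero (hp : IsPmf p) : Apre p x y 0 = 1 := by
  have : Apre p x y 0 = pr p (fun _ _ => True) :=
    pr_congr p (fun x' y' => by simp)
  rw [this, pr_true p hp]

lemma Apre_top (hp : IsPmf p) : Apre p x y n = p x y := by
  have h1 : Apre p x y n = pr p (fun x' y' => x' = x ∧ y' = y) := by
    apply pr_congr; intro x' y'
    constructor
    · rintro ⟨h1, h2⟩
      exact ⟨funext fun j => h1 j j.isLt, funext fun j => h2 j j.isLt⟩
    · rintro ⟨rfl, rfl⟩; exact ⟨fun _ _ => rfl, fun _ _ => rfl⟩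
  rw [h1]
  unfold pr
  beta_reduce
  refine Eq.trans (Finset.sum_eq_single x ?_ ?_) ?_
  · intro b _ hb
    apply Finset.sum_eq_zero
    intro y' _
    rw [if_neg]; tauto
  · intro h; exact absurd (Finset.mem_univ x) h
  refine Eq.trans (Finset.sum_eq_single y ?_ ?_) ?_
  · intro b _ hb
    rw [if_neg]; tauto
  · intro h; exact absurd (Finset.mem_univ y) h
  rw [if_pos ⟨rfl, rfl⟩]

lemma p_le_Apre (hp : IsPmf p) (m : ℕ) : p x y ≤ Apre p x y m := by
  rw [← Apre_top p x y hp]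
  apply pr_mono p hp.1
  rintro x' y' ⟨h1, h2⟩
  exact ⟨fun j _ => h1 j j.isLt, fun j _ => h2 j j.isLt⟩

lemma p_le_Bpre (hp : IsPmf p) (m : ℕ) : p x y ≤ Bpre p x y m := by
  rw [← Apre_top p x y hp]
  apply pr_mono p hp.1
  rintro x' y' ⟨h1, h2⟩
  exact ⟨fun j _ => h1 j j.isLt, fun j _ => h2 j j.isLt⟩

lemma Apre_nonneg (hp : IsPmf p) (m : ℕ) : 0 ≤ Apre p x y m := pr_nonneg p hp.1 _
lemma Bpre_nonneg (hp : IsPmf p) (m : ℕ) : 0 ≤ Bpre p x y m := pr_nonneg p hp.1 _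

lemma condX_nonneg (hp : IsPmf p) (d : ℕ) (i : Fin n) : 0 ≤ condX p d i x y :=
  div_nonneg (pr_nonneg p hp.1 _) (pr_nonneg p hp.1 _)

lemma condY_nonneg (hp : IsPmf p) (d : ℕ) (i : Fin n) : 0 ≤ condY p d i x y :=
  div_nonneg (pr_nonneg p hp.1 _) (pr_nonneg p hp.1 _)

lemma ccX_nonneg (hp : IsPmf p) (d : ℕ) : 0 ≤ ccX p d x y :=
  Finset.prod_nonneg fun i _ => condX_nonneg p x y hp d i

lemma ccY_nonneg (hp : IsPmf p) (d : ℕ) : 0 ≤ ccY p d x y :=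
  Finset.prod_nonneg fun i _ => condY_nonneg p x y hp d i

private lemma telescope (A : ℕ → ℝ) : ∀ m : ℕ, (∀ k, k < m → A k ≠ 0) →
    A 0 * ∏ i ∈ Finset.range m, A (i+1) / A i = A m
  | 0, _ => by simp
  | (m+1), h => by
    rw [Finset.prod_range_succ, ← mul_assoc, telescope A m (fun k hk => h k (by omega))]
    have hm' : A m ≠ 0 := h m (by omega)
    field_simp

lemma chain_rule (hp : IsPmf p) : ccX p 1 x y * ccY p 0 x y = p x y := by
  by_cases hz : ∃ i : Fin n, Apre p x y i = 0 ∨ Bpre p x y i = 0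
  · obtain ⟨i, hi⟩ := hz
    have hp0 : p x y = 0 := by
      rcases hi with h | h
      · exact le_antisymm (h ▸ p_le_Apre p x y hp i) (hp.1 x y)
      · exact le_antisymm (h ▸ p_le_Bpre p x y hp i) (hp.1 x y)
    rw [hp0]
    rcases hi with h | h
    · have : ccX p 1 x y = 0 := by
        apply Finset.prod_eq_zero (Finset.mem_univ i)
        rw [condX_one, h, div_zero]
      rw [this, zero_mul]
    · have : ccY p 0 x y = 0 := by
        apply Finset.prod_eq_zero (Finset.mem_univ i)
        rw [condY_zero, h, div_zero]
      rw [this, mul_zero]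
  · push_neg at hz
    have hstep : ∀ i : Fin n, condX p 1 i x y * condY p 0 i x y =
        Apre p x y ((i:ℕ)+1) / Apre p x y i := by
      intro i
      rw [condX_one, condY_zero]
      have hB := (hz i).2
      rw [div_mul_div_comm, mul_comm (Apre p x y (i:ℕ)) (Bpre p x y (i:ℕ))]
      exact mul_div_mul_left _ _ hB
    unfold ccX ccY
    rw [← Finset.prod_mul_distrib]
    simp only [hstep]
    rw [Fin.prod_univ_eq_prod_range (fun m => Apre p x y (m+1) / Apre p x y m) n]
    have := telescope (Apre p x y) n (fun k hk => (hz ⟨k, hk⟩).1)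
    rw [Apre_zero p x y hp, one_mul, Apre_top p x y hp] at this
    exact this

end Chain

section SumCC
variable {n : ℕ} (p : (Fin n → α) → (Fin n → β) → ℝ)

lemma sum_pr_fiber (E : (Fin n → α) → (Fin n → β) → Prop) (i : Fin n) :
    ∑ a : α, pr p (fun x' y' => E x' y' ∧ x' i = a) = pr p E := by
  unfold pr
  rw [Finset.sum_comm]
  refine Finset.sum_congr rfl fun x _ => ?_
  rw [Finset.sum_comm]
  refine Finset.sum_congr rfl fun y _ => ?_
  refine Eq.trans (Finset.sum_eq_single (x i) ?_ ?_) ?_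
  · intro b _ hb
    rw [if_neg]; tauto
  · intro h; exact absurd (Finset.mem_univ _) h
  by_cases hE : E x y
  · rw [if_pos ⟨hE, rfl⟩, if_pos hE]
  · rw [if_neg (fun h => hE h.1), if_neg hE]

lemma condX_congr (i : Fin n) {x x' : Fin n → α} (y : Fin n → β)
    (h : ∀ j : Fin n, (j:ℕ) ≤ (i:ℕ) → x j = x' j) :
    condX p 1 i x y = condX p 1 i x' y := by
  unfold condX
  refine congrArg₂ (· / ·) (pr_congr p ?_) (pr_congr p ?_) <;> intro a b
  · constructor
    · rintro ⟨h1, h2, h3⟩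
      exact ⟨fun j hj => (h1 j hj).trans (h j (le_of_lt hj)), h2.trans (h i le_rfl), h3⟩
    · rintro ⟨h1, h2, h3⟩
      exact ⟨fun j hj => (h1 j hj).trans (h j (le_of_lt hj)).symm, h2.trans (h i le_rfl).symm, h3⟩
  · constructor
    · rintro ⟨h1, h2⟩
      exact ⟨fun j hj => (h1 j hj).trans (h j (le_of_lt hj)), h2⟩
    · rintro ⟨h1, h2⟩
      exact ⟨fun j hj => (h1 j hj).trans (h j (le_of_lt hj)).symm, h2⟩

lemma sum_condX_update (hp : IsPmf p) (i : Fin n) (x : Fin n → α) (y : Fin n → β) :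
    ∑ a : α, condX p 1 i (Function.update x i a) y ≤ 1 := by
  set E : (Fin n → α) → (Fin n → β) → Prop :=
    fun x' y' => (∀ j, j < i → x' j = x j) ∧ ∀ j : Fin n, (j:ℕ) + 1 ≤ (i:ℕ) → y' j = y j with hE
  have hnum : ∀ a : α, condX p 1 i (Function.update x i a) y =
      pr p (fun x' y' => E x' y' ∧ x' i = a) / pr p E := by
    intro a
    unfold condX
    refine congrArg₂ (· / ·) (pr_congr p ?_) (pr_congr p ?_) <;> intro x' y'
    · constructor
      · rintro ⟨h1, h2, h3⟩
        refine ⟨⟨fun j hj => (h1 j hj).trans (Function.update_of_ne (Fin.ne_of_lt hj) _ _), h3⟩,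
          h2.trans (Function.update_self i a x)⟩
      · rintro ⟨⟨h1, h3⟩, h2⟩
        exact ⟨fun j hj => (h1 j hj).trans (Function.update_of_ne (Fin.ne_of_lt hj) _ _).symm,
          h2.trans (Function.update_self i a x).symm, h3⟩
    · constructor
      · rintro ⟨h1, h3⟩
        exact ⟨fun j hj => (h1 j hj).trans (Function.update_of_ne (Fin.ne_of_lt hj) _ _), h3⟩
      · rintro ⟨h1, h3⟩
        exact ⟨fun j hj => (h1 j hj).trans (Function.update_of_ne (Fin.ne_of_lt hj) _ _).symm, h3⟩
  simp only [hnum]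
  rw [← Finset.sum_div, sum_pr_fiber p E i]
  by_cases hD : pr p E = 0
  · rw [hD, div_zero]; norm_num
  · rw [div_self hD]

lemma sum_ccX_aux (hp : IsPmf p) (y : Fin n → β) :
    ∀ d : ℕ, d ≤ n → ∀ x : Fin n → α,
    (∑ z : Fin n → α, if (∀ j : Fin n, (j:ℕ) < n - d → z j = x j) then
        (∏ i : Fin n, if n - d ≤ (i:ℕ) then condX p 1 i z y else 1) else 0) ≤ 1 := by
  intro d
  induction d with
  | zero =>
    intro _ x
    have h1 : ∀ z : Fin n → α,
        (if (∀ j : Fin n, (j:ℕ) < n - 0 → z j = x j) then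
          (∏ i : Fin n, if n - 0 ≤ (i:ℕ) then condX p 1 i z y else 1) else 0)
        = if z = x then 1 else 0 := by
      intro z
      have hcond : (∀ j : Fin n, (j:ℕ) < n - 0 → z j = x j) ↔ z = x :=
        ⟨fun h => funext fun j => h j (by simpa using j.isLt), by rintro rfl; exact fun _ _ => rfl⟩
      have hprod : (∏ i : Fin n, if n - 0 ≤ (i:ℕ) then condX p 1 i z y else 1) = 1 :=
        Finset.prod_eq_one fun i _ => if_neg (by have := i.isLt; omega)
      by_cases hz : z = x
      · rw [if_pos (hcond.mpr hz), hprod, if_pos hz]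
      · rw [if_neg (fun h => hz (hcond.mp h)), if_neg hz]
    rw [Finset.sum_congr rfl fun z _ => h1 z]
    rw [Finset.sum_ite_eq' Finset.univ x (fun _ => (1:ℝ))]
    simp
  | succ d ih =>
    intro hd x
    have hd' : d ≤ n := by omega
    set m : ℕ := n - (d+1) with hm
    have hmn : m < n := by omega
    have hnd : n - d = m + 1 := by omega
    set im : Fin n := ⟨m, hmn⟩ with him
    -- rewrite the product, splitting off the factor at `im`
    have hsplit : ∀ z : Fin n → α,
        (∏ i : Fin n, if m ≤ (i:ℕ) then condX p 1 i z y else 1)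
        = condX p 1 im z y * ∏ i : Fin n, if m + 1 ≤ (i:ℕ) then condX p 1 i z y else 1 := by
      intro z
      have himv : (im:ℕ) = m := rfl
      rw [← Finset.mul_prod_erase Finset.univ _ (Finset.mem_univ im)]
      rw [if_pos (le_of_eq himv.symm)]
      congr 1
      refine (Finset.prod_congr rfl fun i hi => ?_).trans
        (Finset.prod_erase (a := im) Finset.univ (if_neg (by omega)))
      have hne : (i:ℕ) ≠ m := fun h => (Finset.mem_erase.mp hi).1 (Fin.ext h)
      by_cases h : m + 1 ≤ (i:ℕ)
      · rw [if_pos (by omega), if_pos h]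
      · rw [if_neg (by omega), if_neg h]
    -- split the sum according to the value at `im`
    have hfib : ∀ (F : (Fin n → α) → ℝ), (∑ z : Fin n → α, F z)
        = ∑ a : α, ∑ z : Fin n → α, if z im = a then F z else 0 := by
      intro F
      rw [Finset.sum_comm]
      refine (Finset.sum_congr rfl fun z _ => ?_).symm
      rw [Finset.sum_ite_eq Finset.univ (z im) (fun _ => F z), if_pos (Finset.mem_univ _)]
    have hx'j : ∀ (a : α) (j : Fin n), (j:ℕ) ≠ m → Function.update x im a j = x j :=
      fun a j hj => Function.update_of_ne (fun he => hj (congrArg Fin.val he)) _ _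
    have hx'im : ∀ a : α, Function.update x im a im = a :=
      fun a => Function.update_self _ _ _
    have build : ∀ (a : α) (z : Fin n → α), z im = a →
        (∀ j : Fin n, (j:ℕ) < m → z j = x j) →
        ∀ j : Fin n, (j:ℕ) < m + 1 → z j = Function.update x im a j := by
      intro a z hz hc j hj
      rcases eq_or_ne ((j:ℕ)) m with h | h
      · have hj' : j = im := Fin.ext h
        subst hj'
        exact hz.trans (hx'im a).symm
      · exact (hc j (by omega)).trans (hx'j a j h).symm
    calc (∑ z : Fin n → α, if (∀ j : Fin n, (j:ℕ) < m → z j = x j) then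
            (∏ i : Fin n, if m ≤ (i:ℕ) then condX p 1 i z y else 1) else 0)
        = ∑ a : α, condX p 1 im (Function.update x im a) y *
            ∑ z : Fin n → α, if (∀ j : Fin n, (j:ℕ) < m + 1 → z j = Function.update x im a j) then
              (∏ i : Fin n, if m + 1 ≤ (i:ℕ) then condX p 1 i z y else 1) else 0 := by
          rw [hfib]
          refine Finset.sum_congr rfl fun a _ => ?_
          rw [Finset.mul_sum]
          refine Finset.sum_congr rfl fun z _ => ?_
          by_cases h1 : ∀ j : Fin n, (j:ℕ) < m + 1 → z j = Function.update x im a j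
          · have hzim : z im = a := (h1 im (by simp [him])).trans (hx'im a)
            have hcond : ∀ j : Fin n, (j:ℕ) < m → z j = x j := fun j hj =>
              (h1 j (by omega)).trans (hx'j a j (by omega))
            rw [if_pos hzim, if_pos hcond, hsplit z, if_pos h1]
            congr 1
            apply condX_congr p im y
            intro j hj
            exact h1 j (by simpa [him] using Nat.lt_succ_of_le hj)
          · rw [if_neg h1, mul_zero]
            by_cases h2 : z im = a
            · rw [if_pos h2, if_neg (fun hc => h1 (build a z h2 hc))]
            · rw [if_neg h2]
      _ ≤ ∑ a : α, condX p 1 im (Function.update x im a) y := by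
          refine Finset.sum_le_sum fun a _ => ?_
          refine mul_le_of_le_one_right (condX_nonneg p (Function.update x im a) y hp 1 im) ?_
          have := ih hd' (Function.update x im a)
          rw [hnd] at this
          exact this
      _ ≤ 1 := sum_condX_update p hp im x y

lemma sum_ccX_le_one (hp : IsPmf p) (y : Fin n → β) :
    ∑ x : Fin n → α, ccX p 1 x y ≤ 1 := by
  rcases isEmpty_or_nonempty (Fin n → α) with he | ⟨⟨x0⟩⟩
  · simp
  have h := sum_ccX_aux p hp y n le_rfl x0
  rw [Nat.sub_self] at h
  refine le_trans (le_of_eq ?_) h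
  refine Finset.sum_congr rfl fun z _ => ?_
  rw [if_pos (fun j hj => absurd hj (by omega))]
  unfold ccX
  exact Finset.prod_congr rfl fun i _ => (if_pos (Nat.zero_le _)).symm

end SumCC

section Main
variable {n : ℕ} (p : (Fin n → α) → (Fin n → β) → ℝ)

lemma pX_nonneg (hp : IsPmf p) (x : Fin n → α) : 0 ≤ pX p x :=
  Finset.sum_nonneg fun y _ => hp.1 x y

lemma pY_nonneg (hp : IsPmf p) (y : Fin n → β) : 0 ≤ pY p y :=
  Finset.sum_nonneg fun x _ => hp.1 x y

lemma sum_pX (hp : IsPmf p) : ∑ x, pX p x = 1 := hp.2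

lemma sum_pY (hp : IsPmf p) : ∑ y, pY p y = 1 := by
  unfold pY; rw [Finset.sum_comm]; exact hp.2

lemma p_le_pX (hp : IsPmf p) (x : Fin n → α) (y : Fin n → β) : p x y ≤ pX p x :=
  Finset.single_le_sum (fun y' _ => hp.1 x y') (Finset.mem_univ y)

lemma p_le_pY (hp : IsPmf p) (x : Fin n → α) (y : Fin n → β) : p x y ≤ pY p y :=
  Finset.single_le_sum (f := fun x' => p x' y) (fun x' _ => hp.1 x' y) (Finset.mem_univ x)

lemma pr_eq_pX (x : Fin n → α) : pr p (fun x' _ => x' = x) = pX p x := by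
  unfold pr pX
  refine Eq.trans (Finset.sum_eq_single x ?_ ?_) ?_
  · intro b _ hb; exact Finset.sum_eq_zero fun y _ => if_neg hb
  · intro h; exact absurd (Finset.mem_univ x) h
  · exact Finset.sum_congr rfl fun y _ => if_pos rfl

lemma ccX_eq_zero (hp : IsPmf p) {x : Fin n → α} (hx : pX p x = 0) (y : Fin n → β) :
    ccX p 1 x y = 0 := by
  cases n with
  | zero =>
    exfalso
    have hall : ∀ x' : Fin 0 → α, x' = x := fun x' => funext fun j => j.elim0
    have h0 : (1:ℝ) = 0 := by
      calc (1:ℝ) = ∑ x' : Fin 0 → α, pX p x' := hp.2.symm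
        _ = ∑ _x' : Fin 0 → α, pX p x := Finset.sum_congr rfl fun x' _ => by rw [hall x']
        _ = (Finset.univ.card : ℝ) * pX p x := by rw [Finset.sum_const, nsmul_eq_mul]
        _ = 0 := by rw [hx, mul_zero]
    norm_num at h0
  | succ k =>
    apply Finset.prod_eq_zero (Finset.mem_univ (Fin.last k))
    have hnum : pr p (fun x' y' => (∀ j, j < Fin.last k → x' j = x j) ∧ x' (Fin.last k) = x (Fin.last k) ∧
        ∀ j : Fin (k+1), (j:ℕ) + 1 ≤ ((Fin.last k : Fin (k+1)):ℕ) → y' j = y j) = 0 := by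
      refine le_antisymm ?_ (pr_nonneg p hp.1 _)
      refine le_trans (pr_mono p hp.1 ?_) (le_of_eq ((pr_eq_pX p x).trans hx))
      rintro x' y' ⟨h1, h2, -⟩
      funext j
      rcases eq_or_ne j (Fin.last k) with rfl | hne
      · exact h2
      · exact h1 j (Fin.lt_last_iff_ne_last.mpr hne)
    unfold condX
    rw [hnum, zero_div]

lemma cc_pos (hp : IsPmf p) {x : Fin n → α} {y : Fin n → β} (hP : 0 < p x y) :
    0 < ccX p 1 x y ∧ 0 < ccY p 0 x y := by
  have hcc := chain_rule p x y hp
  constructor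
  · refine (ccX_nonneg p x y hp 1).lt_of_ne (Ne.symm fun h => ?_)
    rw [h, zero_mul] at hcc; exact hP.ne hcc
  · refine (ccY_nonneg p x y hp 0).lt_of_ne (Ne.symm fun h => ?_)
    rw [h, mul_zero] at hcc; exact hP.ne hcc

lemma key_term (hp : IsPmf p) {x : Fin n → α} {y : Fin n → β}
    (hX : 0 < pX p x) (hY : 0 < pY p y) (hP : 0 < p x y) :
    pX p x * pY p y * Real.logb 2 (pX p x * pY p y / p x y)
      - pX p x * pY p y * Real.logb 2 (pY p y / ccY p 0 x y)
    = pX p x * pY p y * Real.logb 2 (pX p x * pY p y / (ccX p 1 x y * pY p y)) := by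
  obtain ⟨hccX, hccY⟩ := cc_pos p hp hP
  have hcc := chain_rule p x y hp
  rw [← mul_sub]
  congr 1
  have h1 : Real.logb 2 (pX p x * pY p y / p x y)
      = Real.logb 2 (pX p x * pY p y) - Real.logb 2 (p x y) :=
    Real.logb_div (ne_of_gt (mul_pos hX hY)) (ne_of_gt hP)
  have h2 : Real.logb 2 (pY p y / ccY p 0 x y)
      = Real.logb 2 (pY p y) - Real.logb 2 (ccY p 0 x y) :=
    Real.logb_div (ne_of_gt hY) (ne_of_gt hccY)
  have h3 : Real.logb 2 (pX p x * pY p y / (ccX p 1 x y * pY p y))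
      = Real.logb 2 (pX p x * pY p y) - (Real.logb 2 (ccX p 1 x y) + Real.logb 2 (pY p y)) := by
    rw [Real.logb_div (ne_of_gt (mul_pos hX hY)) (ne_of_gt (mul_pos hccX hY)),
      Real.logb_mul (ne_of_gt hccX) (ne_of_gt hY)]
  have h4 : Real.logb 2 (p x y) = Real.logb 2 (ccX p 1 x y) + Real.logb 2 (ccY p 0 x y) := by
    rw [← hcc, Real.logb_mul (ne_of_gt hccX) (ne_of_gt hccY)]
  rw [h1, h2, h3, h4]
  ring

end Main

/-- if `L(X^n;Y^n) = L₁(X^n → Y^n)` then `p(x^n) = p(x^n||y^{n-1})`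
on the support of `p`; conversely, if `p(x^n) = p(x^n||y^{n-1})` on the support of
`p`, then `L(X^n;Y^n) = L₁(X^n→Y^n) = L₂(X^n→Y^n)`. -/
theorem lautum_equality_condition {n : ℕ}
    (p : (Fin n → α) → (Fin n → β) → ℝ) (hp : IsPmf p)
    (hsupp : ∀ x y, 0 < pX p x * pY p y → 0 < p x y) :
    (lautum p = lautum1XY p →
      ∀ x y, 0 < p x y → pX p x = ccX p 1 x y) ∧
    ((∀ x y, 0 < p x y → pX p x = ccX p 1 x y) →
      lautum p = lautum1XY p ∧ lautum1XY p = lautum2XY p) := by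
  have hXn : ∀ x, 0 ≤ pX p x := pX_nonneg p hp
  have hYn : ∀ y, 0 ≤ pY p y := pY_nonneg p hp
  have hpos' : ∀ x y, 0 < pX p x * pY p y → 0 < pX p x ∧ 0 < pY p y := by
    intro x y h
    rcases mul_pos_iff.mp h with ⟨h1, h2⟩ | ⟨h1, h2⟩
    · exact ⟨h1, h2⟩
    · exact absurd h1 (not_lt.mpr (hXn x))
  have hdiff : lautum p - lautum1XY p
      = ∑ x, ∑ y, pX p x * pY p y * Real.logb 2 (pX p x * pY p y / (ccX p 1 x y * pY p y)) := by
    unfold lautum lautum1XY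
    rw [← Finset.sum_sub_distrib]
    refine Finset.sum_congr rfl fun x _ => ?_
    rw [← Finset.sum_sub_distrib]
    refine Finset.sum_congr rfl fun y _ => ?_
    rcases eq_or_lt_of_le (mul_nonneg (hXn x) (hYn y)) with h | h
    · rw [← h]; ring
    · obtain ⟨h1, h2⟩ := hpos' x y h
      exact key_term p hp h1 h2 (hsupp x y h)
  have hq1 : ∑ z : (Fin n → α) × (Fin n → β), pX p z.1 * pY p z.2 = 1 := by
    rw [Fintype.sum_prod_type, ← Finset.sum_mul_sum, sum_pX p hp, sum_pY p hp, one_mul]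
  have hrsum : ∑ z : (Fin n → α) × (Fin n → β), ccX p 1 z.1 z.2 * pY p z.2 ≤ 1 := by
    rw [Fintype.sum_prod_type, Finset.sum_comm]
    calc ∑ y : Fin n → β, ∑ x : Fin n → α, ccX p 1 x y * pY p y
        = ∑ y : Fin n → β, (∑ x, ccX p 1 x y) * pY p y := by
          refine Finset.sum_congr rfl fun y _ => ?_; rw [Finset.sum_mul]
      _ ≤ ∑ y : Fin n → β, 1 * pY p y := by
          refine Finset.sum_le_sum fun y _ => ?_
          exact mul_le_mul_of_nonneg_right (sum_ccX_le_one p hp y) (hYn y)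
      _ = 1 := by simp only [one_mul]; exact sum_pY p hp
  have hqn : ∀ z : (Fin n → α) × (Fin n → β), 0 ≤ pX p z.1 * pY p z.2 :=
    fun z => mul_nonneg (hXn z.1) (hYn z.2)
  have hqr : ∀ z : (Fin n → α) × (Fin n → β),
      0 < pX p z.1 * pY p z.2 → 0 < ccX p 1 z.1 z.2 * pY p z.2 := by
    intro z hz
    exact mul_pos (cc_pos p hp (hsupp z.1 z.2 hz)).1 (hpos' z.1 z.2 hz).2
  constructor
  · intro heq x y hpxy
    have hX : 0 < pX p x := lt_of_lt_of_le hpxy (p_le_pX p hp x y)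
    have hY : 0 < pY p y := lt_of_lt_of_le hpxy (p_le_pY p hp x y)
    have hz : lautum p - lautum1XY p = 0 := by rw [heq, sub_self]
    rw [hdiff] at hz
    have hL3 : (∑ z : (Fin n → α) × (Fin n → β),
        pX p z.1 * pY p z.2 * Real.logb 2 (pX p z.1 * pY p z.2 / (ccX p 1 z.1 z.2 * pY p z.2)))
        = 0 := by
      rw [Fintype.sum_prod_type]; exact hz
    have hgibbs := gibbs (fun z : (Fin n → α) × (Fin n → β) => pX p z.1 * pY p z.2)
      (fun z => ccX p 1 z.1 z.2 * pY p z.2) hqn hq1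
      (fun z => mul_nonneg (ccX_nonneg p z.1 z.2 hp 1) (hYn z.2)) hrsum hqr hL3
    have := hgibbs (x, y) (mul_pos hX hY)
    exact mul_right_cancel₀ (ne_of_gt hY) this
  · intro h
    have hL3z : (∑ x, ∑ y, pX p x * pY p y *
        Real.logb 2 (pX p x * pY p y / (ccX p 1 x y * pY p y))) = 0 := by
      refine Finset.sum_eq_zero fun x _ => Finset.sum_eq_zero fun y _ => ?_
      rcases eq_or_lt_of_le (mul_nonneg (hXn x) (hYn y)) with hπ | hπ
      · rw [← hπ, zero_mul]
      · have hP := hsupp x y hπ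
        have hccX := (cc_pos p hp hP).1
        rw [h x y hP, div_self (ne_of_gt (mul_pos hccX (hpos' x y hπ).2)),
          Real.logb_one, mul_zero]
    constructor
    · have := hdiff.trans hL3z
      linarith
    · unfold lautum1XY lautum2XY
      refine Finset.sum_congr rfl fun x _ => Finset.sum_congr rfl fun y _ => ?_
      rcases eq_or_lt_of_le (hYn y) with hY | hY
      · rw [← hY]; ring
      rcases eq_or_lt_of_le (hXn x) with hX | hX
      · rw [← hX, ccX_eq_zero p hp hX.symm y]
      · rw [h x y (hsupp x y (mul_pos hX hY))]
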